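/- Let α₁, …, α₅ ∈ ℂ and let (x, y, z) be a solution of the modified reduced three-wave interaction system (2) with parameters (α₁, α₂, α₃, α₄, α₅) on a connected open set U ⊆ ℂ such that y(t) ≠ α₅ for all t ∈ U. Define s·x = x − √−1(α₂−α₄)/(2(y−α₅)), s·y = y, and s·z = [4y²z − 8α₅yz + 4√−1(α₂−α₄)xy − 4√−1(α₂−α₄)α₅x − 2(α₁−α₃)(α₂−α₄)y + 4α₅²z + (α₂−α₄)(α₂−α₄+2(α₁−α₃)α₅)] / (4(y−α₅)²). Then (s·x, s·y, s·z) is a solution on U of system (2) with parameters (α₁, α₄, α₃, α₂, α₅). -/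

import Mathlib

open Complex

noncomputable section

/-- A solution of the modified reduced three-wave interaction dynamical system (2)
on a set `U ⊆ ℂ`, with parameters `α₁, …, α₅ : ℂ`. -/
def solMTWI (α₁ α₂ α₃ α₄ α₅ : ℂ) (x y z : ℂ → ℂ) (U : Set ℂ) : Prop :=
  ∀ t ∈ U,
    HasDerivAt x
      (-2 * (y t) ^ 2 - (α₁ + α₃ - 2 * α₅) * y t + z t
        + (α₂ + α₄ + 2 * (α₁ + α₃) * α₅) / 2) t ∧
    HasDerivAt y
      (2 * x t * y t - 2 * α₅ * x t + I * (α₁ - α₃) * y t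
        - I * (α₂ - α₄ + 2 * (α₁ - α₃) * α₅) / 2) t ∧
    HasDerivAt z
      (-2 * x t * z t - (α₂ + α₄) * x t + I * (α₂ - α₄) * y t
        - I * (α₁ - α₃) * z t + I * (α₂ * α₃ - α₁ * α₄)) t

set_option maxHeartbeats 2000000 in
theorem stmt9 (α₁ α₂ α₃ α₄ α₅ : ℂ) (U : Set ℂ) (hU : IsOpen U) (hUc : IsConnected U)
    (x y z : ℂ → ℂ) (hsol : solMTWI α₁ α₂ α₃ α₄ α₅ x y z U)
    (hy : ∀ t ∈ U, y t ≠ α₅) :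
    solMTWI α₁ α₄ α₃ α₂ α₅
      (fun t => x t - I * (α₂ - α₄) / (2 * (y t - α₅)))
      y
      (fun t =>
        (4 * (y t) ^ 2 * z t - 8 * α₅ * y t * z t + 4 * I * (α₂ - α₄) * x t * y t
          - 4 * I * (α₂ - α₄) * α₅ * x t - 2 * (α₁ - α₃) * (α₂ - α₄) * y t
          + 4 * α₅ ^ 2 * z t
          + (α₂ - α₄) * (α₂ - α₄ + 2 * (α₁ - α₃) * α₅)) / (4 * (y t - α₅) ^ 2))
      U := by
  intro t ht
  obtain ⟨hx, hy', hz⟩ := hsol t ht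
  have hw : y t - α₅ ≠ 0 := sub_ne_zero.mpr (hy t ht)
  have hw2 : (2 : ℂ) * (y t - α₅) ≠ 0 := mul_ne_zero two_ne_zero hw
  have hw4 : (4 : ℂ) * (y t - α₅) ^ 2 ≠ 0 :=
    mul_ne_zero (by norm_num) (pow_ne_zero 2 hw)
  have hX := hx.sub
    ((hasDerivAt_const t (I * (α₂ - α₄))).div ((hy'.sub_const α₅).const_mul 2) hw2)
  have h1 := ((hy'.pow 2).const_mul 4).mul hz
  have h2 := (hy'.const_mul (8 * α₅)).mul hz
  have h3 := (hx.const_mul (4 * I * (α₂ - α₄))).mul hy'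
  have h4 := hx.const_mul (4 * I * (α₂ - α₄) * α₅)
  have h5 := hy'.const_mul (2 * (α₁ - α₃) * (α₂ - α₄))
  have h6 := hz.const_mul (4 * α₅ ^ 2)
  have hN := (((((h1.sub h2).add h3).sub h4).sub h5).add h6).add_const
    ((α₂ - α₄) * (α₂ - α₄ + 2 * (α₁ - α₃) * α₅))
  have hD := ((hy'.sub_const α₅).pow 2).const_mul 4
  have hZ := hN.div hD hw4
  refine ⟨?_, ?_, ?_⟩
  · refine hX.congr_deriv (Eq.symm ?_)
    field_simp
    ring_nf
    simp only [Complex.I_sq]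
    ring
  · convert hy' using 1
    field_simp
    ring_nf
  · refine hZ.congr_deriv (Eq.symm ?_)
    simp only [Pi.pow_apply, Pi.mul_apply, Pi.sub_apply, Pi.add_apply]
    field_simp
    set_option maxRecDepth 100000 in
    ring_nf
    set_option maxRecDepth 100000 in
    simp only [Complex.I_sq]
    set_option maxRecDepth 100000 in
    ring
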